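/- Every 0-wire-mismatch permutation gate is in the Clifford Hierarchy: if a permutation gate on n qubits can be written as a finite product of multi-controlled-NOT gates such that every wire carries only targets or only controls (never both), then all the constituent gates pairwise commute and their product lies in some finite level of the Clifford Hierarchy. -/

import Mathlib

/-- Basis states of `n` qubits. -/
abbrev QState (n : ℕ) := Fin n → ZMod 2

/-- `2^n × 2^n` complex matrices, indexed by basis states of `n` qubits. -/
abbrev QMat (n : ℕ) := Matrix (QState n) (QState n) ℂ

noncomputable section

namespace CHPaper

/-- Pauli X string: the permutation matrix adding the vector `v` (bit flips). -/
def XStr {n : ℕ} (v : QState n) : QMat n :=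
  Matrix.of fun x y => if x = y + v then (1 : ℂ) else 0

/-- Pauli Z string: diagonal sign matrix determined by the vector `v`. -/
def ZStr {n : ℕ} (v : QState n) : QMat n :=
  Matrix.diagonal fun x => (-1 : ℂ) ^ (ZMod.val (∑ i, v i * x i))

/-- The `n`-qubit Pauli group (with phases that are fourth roots of unity). -/
def Pauli (n : ℕ) : Set (QMat n) :=
  {M | ∃ (c : ℂ) (v w : QState n), c ^ 4 = 1 ∧ M = c • (XStr v * ZStr w)}

/-- The Clifford Hierarchy: level 1 is the Pauli group, and
`U ∈ CH n (k+1)` iff `U` is unitary and conjugates every Pauli into `CH n k`. -/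
def CH (n : ℕ) : ℕ → Set (QMat n)
  | 0 => {1}
  | 1 => Pauli n
  | (k+2) => {U | U ∈ Matrix.unitaryGroup (QState n) ℂ ∧
      ∀ P ∈ Pauli n, U * P * star U ∈ CH n (k+1)}

/-- Membership in some finite level of the Clifford Hierarchy. -/
def InCH {n : ℕ} (M : QMat n) : Prop := ∃ k, M ∈ CH n k

/-- The permutation matrix of a permutation of basis states. -/
def permMat {n : ℕ} (σ : Equiv.Perm (QState n)) : QMat n :=
  Matrix.of fun x y => if x = σ y then (1 : ℂ) else 0

/-- A matrix is a permutation matrix. -/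
def IsPermMat {n : ℕ} (M : QMat n) : Prop :=
  ∃ σ : Equiv.Perm (QState n), M = permMat σ

/-- A monomial (generalized permutation) matrix: exactly one nonzero entry in
each row and column. -/
def IsMonomial {n : ℕ} (M : QMat n) : Prop :=
  ∃ (σ : Equiv.Perm (QState n)) (d : QState n → ℂ), (∀ x, d x ≠ 0) ∧
    M = Matrix.of fun x y => if x = σ y then d y else 0

/-- The action of a multi-controlled NOT with target t, control set S, and
control polarities p: flip bit t when every control bit matches its polarity. -/
def mcxFun {n : ℕ} (t : Fin n) (S : Finset (Fin n)) (p : QState n)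
    (x : QState n) : QState n :=
  if ∀ i ∈ S, x i = p i then Function.update x t (x t + 1) else x

/-- The matrix of a multi-controlled NOT gate. -/
def mcxMat {n : ℕ} (t : Fin n) (S : Finset (Fin n)) (p : QState n) : QMat n :=
  Matrix.of fun x y => if x = mcxFun t S p y then (1 : ℂ) else 0
-- ZMod 2 helpers
variable {n : ℕ}

lemma z2_add_self : ∀ a : ZMod 2, a + a = 0 := by decide

lemma q_add_self (a : QState n) : a + a = 0 := by
  funext i; exact z2_add_self (a i)

lemma q_add_add_self (a b : QState n) : a + b + b = a := by
  rw [add_assoc, q_add_self, add_zero]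

/-- sign of a ZMod 2 element -/
def sgn (a : ZMod 2) : ℂ := (-1 : ℂ) ^ a.val

lemma sgn_zero : sgn (0 : ZMod 2) = 1 := by simp [sgn]

lemma z2_cases : ∀ a : ZMod 2, a = 0 ∨ a = 1 := by decide

lemma sgn_one : sgn (1 : ZMod 2) = -1 := by norm_num [sgn, ZMod.val_one]

lemma sgn_add (a b : ZMod 2) : sgn (a + b) = sgn a * sgn b := by
  rcases z2_cases a with rfl | rfl <;> rcases z2_cases b with rfl | rfl <;>
    simp [sgn_zero, sgn_one, show (1+1 : ZMod 2) = 0 by decide]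

lemma sgn_sq (a : ZMod 2) : sgn a * sgn a = 1 := by
  rw [← sgn_add, z2_add_self, sgn_zero]

lemma sgn_pow4 (a : ZMod 2) : sgn a ^ 4 = 1 := by
  calc sgn a ^ 4 = (sgn a * sgn a) * (sgn a * sgn a) := by ring
    _ = 1 := by rw [sgn_sq]; ring

lemma conj_sgn (a : ZMod 2) : (starRingEnd ℂ) (sgn a) = sgn a := by
  fin_cases a <;> simp [sgn]

def dot (w y : QState n) : ZMod 2 := ∑ i, w i * y i

lemma dot_add_right (w a b : QState n) : dot w (a + b) = dot w a + dot w b := by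
  simp [dot, Pi.add_apply, mul_add, Finset.sum_add_distrib]

lemma dot_add_left (w w' a : QState n) : dot (w + w') a = dot w a + dot w' a := by
  simp [dot, Pi.add_apply, add_mul, Finset.sum_add_distrib]
/-- monomial-form matrices -/
def monoM (φ : QState n → QState n) (c : QState n → ℂ) : QMat n :=
  Matrix.of fun x y => if x = φ y then c y else 0

lemma monoM_congr {φ ψ : QState n → QState n} {c d : QState n → ℂ}
    (h1 : ∀ y, φ y = ψ y) (h2 : ∀ y, c y = d y) : monoM φ c = monoM ψ d := by
  have : φ = ψ := funext h1
  have hcd : c = d := funext h2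
  rw [monoM, this, hcd, monoM]

lemma monoM_mul (φ ψ : QState n → QState n) (c d : QState n → ℂ) :
    monoM φ c * monoM ψ d = monoM (fun y => φ (ψ y)) (fun y => c (ψ y) * d y) := by
  ext x y
  simp only [monoM, Matrix.mul_apply, Matrix.of_apply]
  rw [Finset.sum_eq_single (ψ y)]
  · simp
  · intro z _ hz; simp [hz]
  · intro hmem; exact absurd (Finset.mem_univ _) hmem

lemma monoM_smul (c : ℂ) (φ : QState n → QState n) (t : QState n → ℂ) :
    c • monoM φ t = monoM φ (fun y => c * t y) := by
  ext x y
  simp only [monoM, Matrix.smul_apply, Matrix.of_apply, smul_eq_mul, mul_ite, mul_zero]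

lemma monoM_one : monoM (fun y : QState n => y) (fun _ => (1:ℂ)) = 1 := by
  ext x y
  simp [monoM, Matrix.one_apply]

lemma monoM_star (φ : QState n → QState n) (c : QState n → ℂ) (hφ : ∀ y, φ (φ y) = y) :
    star (monoM φ c) = monoM φ (fun y => (starRingEnd ℂ) (c (φ y))) := by
  ext x y
  simp only [Matrix.star_apply, monoM, Matrix.of_apply]
  by_cases h : x = φ y
  · have h' : y = φ x := by rw [h, hφ]
    rw [if_pos h', if_pos h, h]
    simp
  · have h' : y ≠ φ x := by
      intro hyx
      exact h (by rw [hyx, hφ])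
    rw [if_neg h', if_neg h, star_zero]

lemma XZ_eq (v w : QState n) :
    XStr v * ZStr w = monoM (fun y => y + v) (fun y => sgn (dot w y)) := by
  have hX : XStr v = monoM (fun y => y + v) (fun _ => 1) := rfl
  have hZ : ZStr w = monoM (fun y => y) (fun y => sgn (dot w y)) := by
    ext x y
    simp only [ZStr, monoM, Matrix.diagonal_apply, Matrix.of_apply]
    by_cases h : x = y
    · subst h; simp [sgn, dot]
    · rw [if_neg h, if_neg h]
  rw [hX, hZ, monoM_mul]
  exact monoM_congr (fun y => rfl) (fun y => one_mul _)

lemma pauli_mem_intro (c : ℂ) (v w : QState n) (hc : c ^ 4 = 1) :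
    c • (XStr v * ZStr w) ∈ Pauli n := ⟨c, v, w, hc, rfl⟩

lemma XZ_mem (v w : QState n) : XStr v * ZStr w ∈ Pauli n := by
  have := pauli_mem_intro (n := n) 1 v w (one_pow 4)
  rwa [one_smul] at this

lemma z2lin1 : ∀ a b c d : ZMod 2, a + b + (c + d) = c + (a + (b + d)) := by decide

lemma pauli_mul {P Q : QMat n} (hP : P ∈ Pauli n) (hQ : Q ∈ Pauli n) :
    P * Q ∈ Pauli n := by
  obtain ⟨c1, v1, w1, hc1, rfl⟩ := hP
  obtain ⟨c2, v2, w2, hc2, rfl⟩ := hQ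
  refine ⟨c1 * c2 * sgn (dot w1 v2), v2 + v1, w1 + w2, ?_, ?_⟩
  · rw [mul_pow, mul_pow, hc1, hc2, sgn_pow4]; ring
  · rw [smul_mul_assoc, mul_smul_comm, smul_smul, XZ_eq, XZ_eq, XZ_eq, monoM_mul,
      monoM_smul, monoM_smul]
    apply monoM_congr
    · intro y; rw [add_assoc]
    · intro y
      rw [dot_add_right, sgn_add, dot_add_left, sgn_add]
      ring
lemma XZ_star (v w : QState n) :
    star (XStr v * ZStr w) = sgn (dot w v) • (XStr v * ZStr w) := by
  rw [XZ_eq, monoM_star _ _ (fun y => q_add_add_self y v), monoM_smul]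
  apply monoM_congr (fun y => rfl)
  intro y
  rw [conj_sgn, dot_add_right, sgn_add, mul_comm]

lemma pauli_star {P : QMat n} (hP : P ∈ Pauli n) : star P ∈ Pauli n := by
  obtain ⟨c, v, w, hc, rfl⟩ := hP
  refine ⟨(starRingEnd ℂ) c * sgn (dot w v), v, w, ?_, ?_⟩
  · rw [mul_pow, sgn_pow4, mul_one, ← map_pow, hc, map_one]
  · rw [star_smul, XZ_star, smul_smul]
    rfl

lemma scalar_unit {c : ℂ} (hc : c ^ 4 = 1) : c * (starRingEnd ℂ) c = 1 := by
  have h4 : (‖c‖) ^ 4 = 1 := by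
    rw [← norm_pow, hc, norm_one]
  have h0 : 0 ≤ ‖c‖ := norm_nonneg c
  have h1 : ‖c‖ = 1 := by
    nlinarith [sq_nonneg (‖c‖ - 1), sq_nonneg (‖c‖ + 1),
      sq_nonneg ((‖c‖)^2 - 1), sq_nonneg ((‖c‖)^2 + 1)]
  rw [Complex.mul_conj, ← Complex.sq_norm, h1]
  norm_num

lemma XZ_mul_star (v w : QState n) : (XStr v * ZStr w) * star (XStr v * ZStr w) = 1 := by
  rw [XZ_star, mul_smul_comm, XZ_eq, monoM_mul, monoM_smul]
  rw [← monoM_one]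
  apply monoM_congr
  · intro y; exact q_add_add_self y v
  · intro y
    rw [dot_add_right, sgn_add,
      show sgn (dot w v) * (sgn (dot w y) * sgn (dot w v) * sgn (dot w y))
      = (sgn (dot w v) * sgn (dot w v)) * (sgn (dot w y) * sgn (dot w y)) by ring,
      sgn_sq, sgn_sq, one_mul]

lemma pauli_unitary {P : QMat n} (hP : P ∈ Pauli n) :
    P ∈ Matrix.unitaryGroup (QState n) ℂ := by
  obtain ⟨c, v, w, hc, rfl⟩ := hP
  rw [Matrix.mem_unitaryGroup_iff, star_smul, smul_mul_assoc, mul_smul_comm, smul_smul]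
  have : star c = (starRingEnd ℂ) c := rfl
  rw [this, mul_comm c, XZ_mul_star, mul_comm _ c, scalar_unit hc, one_smul]

lemma CH_one : CH n 1 = Pauli n := rfl

lemma mem_CH_succ_succ {M : QMat n} {k : ℕ}
    (h1 : M ∈ Matrix.unitaryGroup (QState n) ℂ)
    (h2 : ∀ P ∈ Pauli n, M * P * star M ∈ CH n (k+1)) : M ∈ CH n (k+2) :=
  ⟨h1, h2⟩

lemma CH_succ_succ_elim {M : QMat n} {k : ℕ} (h : M ∈ CH n (k+2)) :
    M ∈ Matrix.unitaryGroup (QState n) ℂ ∧ ∀ P ∈ Pauli n, M * P * star M ∈ CH n (k+1) := h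
lemma CH_smul : ∀ (k : ℕ) (c : ℂ) (M : QMat n), c ^ 4 = 1 → M ∈ CH n (k+1) →
    c • M ∈ CH n (k+1) := by
  intro k
  induction k with
  | zero =>
    intro c M hc hM
    obtain ⟨c', v, w, hc', rfl⟩ := hM
    rw [smul_smul]
    exact pauli_mem_intro _ _ _ (by rw [mul_pow, hc, hc', one_mul])
  | succ k IH =>
    intro c M hc hM
    obtain ⟨hu, hconj⟩ := CH_succ_succ_elim hM
    apply mem_CH_succ_succ
    · rw [Matrix.mem_unitaryGroup_iff, star_smul, smul_mul_assoc, mul_smul_comm, smul_smul,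
        Matrix.mem_unitaryGroup_iff.mp hu]
      have : (star c : ℂ) = (starRingEnd ℂ) c := rfl
      rw [this, scalar_unit hc, one_smul]
    · intro P hP
      rw [star_smul, smul_mul_assoc, smul_mul_assoc, mul_smul_comm, smul_smul]
      have : (star c : ℂ) = (starRingEnd ℂ) c := rfl
      rw [this, scalar_unit hc, one_smul]
      exact hconj P hP

lemma CH_pauli_mul : ∀ (k : ℕ) (P M : QMat n), P ∈ Pauli n → M ∈ CH n (k+1) →
    P * M ∈ CH n (k+1) ∧ M * P ∈ CH n (k+1) := by
  intro k
  induction k with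
  | zero =>
    intro P M hP hM
    exact ⟨pauli_mul hP hM, pauli_mul hM hP⟩
  | succ k IH =>
    intro P M hP hM
    obtain ⟨hu, hconj⟩ := CH_succ_succ_elim hM
    constructor
    · apply mem_CH_succ_succ
      · exact mul_mem (pauli_unitary hP) hu
      · intro Q hQ
        have key : (P * M) * Q * star (P * M) = P * (M * Q * star M) * star P := by
          rw [star_mul]; noncomm_ring
        rw [key]
        have h1 := hconj Q hQ
        have h2 := (IH P (M * Q * star M) hP h1).1
        exact (IH (star P) (P * (M * Q * star M)) (pauli_star hP) h2).2
    · apply mem_CH_succ_succ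
      · exact mul_mem hu (pauli_unitary hP)
      · intro Q hQ
        have key : (M * P) * Q * star (M * P) = M * (P * Q * star P) * star M := by
          rw [star_mul]; noncomm_ring
        rw [key]
        exact hconj _ (pauli_mul (pauli_mul hP hQ) (pauli_star hP))
/-- Degree at most `d` for functions `QState n → ZMod 2`, via discrete derivatives. -/
def DegLE : ℕ → (QState n → ZMod 2) → Prop
  | 0, q => ∀ x y, q x = q y
  | (d+1), q => ∀ v, DegLE d (fun y => q (y + v) + q y)

lemma degle_congr : ∀ (d : ℕ) {q q' : QState n → ZMod 2}, (∀ y, q y = q' y) →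
    DegLE d q → DegLE d q' := by
  intro d
  induction d with
  | zero => intro q q' h hq x y; rw [← h x, ← h y]; exact hq x y
  | succ d IH =>
    intro q q' h hq v
    exact IH (fun y => by rw [h (y+v), h y]) (hq v)

lemma degle_mono : ∀ (d : ℕ) {q : QState n → ZMod 2}, DegLE d q → DegLE (d+1) q := by
  intro d
  induction d with
  | zero =>
    intro q hq v x y
    show q (x + v) + q x = q (y + v) + q y
    rw [hq (x+v) (y+v), hq x y]
  | succ d IH =>
    intro q hq v
    exact IH (hq v)

lemma degle_le {d d' : ℕ} (h : d ≤ d') {q : QState n → ZMod 2} (hq : DegLE d q) :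
    DegLE d' q := by
  induction d' with
  | zero => rwa [Nat.le_zero.mp h] at hq
  | succ d' IH =>
    rcases Nat.lt_or_ge d (d'+1) with h1 | h1
    · exact degle_mono d' (IH (Nat.lt_succ_iff.mp h1))
    · rwa [Nat.le_antisymm h h1] at hq

lemma degle_const (d : ℕ) (c : ZMod 2) : DegLE (n := n) d (fun _ => c) :=
  degle_le (Nat.zero_le d) (fun _ _ => rfl)

lemma degle_add : ∀ (d : ℕ) {q1 q2 : QState n → ZMod 2}, DegLE d q1 → DegLE d q2 →
    DegLE d (fun y => q1 y + q2 y) := by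
  intro d
  induction d with
  | zero =>
    intro q1 q2 h1 h2 x y
    show q1 x + q2 x = q1 y + q2 y
    rw [h1 x y, h2 x y]
  | succ d IH =>
    intro q1 q2 h1 h2 v
    have := IH (h1 v) (h2 v)
    apply degle_congr d _ this
    intro y
    show (fun y => q1 (y+v) + q1 y) y + (fun y => q2 (y+v) + q2 y) y
      = q1 (y+v) + q2 (y+v) + (q1 y + q2 y)
    simp only
    ring

lemma degle_shift : ∀ (d : ℕ) {q : QState n → ZMod 2} (v : QState n), DegLE d q →
    DegLE d (fun y => q (y + v)) := by
  intro d
  induction d with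
  | zero => intro q v h x y; exact h _ _
  | succ d IH =>
    intro q v h u
    apply degle_congr d _ (IH v (h u))
    intro y
    show q (y + v + u) + q (y + v) = q (y + u + v) + q (y + v)
    rw [show y + v + u = y + u + v by abel]

lemma degle_sum {α : Type*} (d : ℕ) (s : Finset α) (f : α → QState n → ZMod 2)
    (h : ∀ a ∈ s, DegLE d (f a)) : DegLE d (fun y => ∑ a ∈ s, f a y) := by
  classical
  induction s using Finset.induction with
  | empty => exact degle_congr d (fun y => by simp) (degle_const d 0)
  | insert a s' hni IH =>
    have h1 := h a (Finset.mem_insert_self a s')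
    have h2 := IH (fun b hb => h b (Finset.mem_insert_of_mem hb))
    apply degle_congr d _ (degle_add d h1 h2)
    intro y
    rw [Finset.sum_insert hni]
lemma degle_lin_mul : ∀ (d : ℕ) {q : QState n → ZMod 2} (i : Fin n) (c : ZMod 2),
    DegLE d q → DegLE (d+1) (fun y => (y i + c) * q y) := by
  intro d
  induction d with
  | zero =>
    intro q i c hq v
    intro x y
    show ((x+v) i + c) * q (x+v) + (x i + c) * q x = ((y+v) i + c) * q (y+v) + (y i + c) * q y
    have hx1 : q (x+v) = q x := hq _ _
    have hy1 : q (y+v) = q y := hq _ _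
    have hxy : q x = q y := hq _ _
    rw [hx1, hy1, hxy]
    exact (by decide : ∀ a b c d q : ZMod 2,
      (a+b+c) * q + (a+c) * q = (d+b+c) * q + (d+c) * q) (x i) (v i) c (y i) (q y)
  | succ d IH =>
    intro q i c hq v
    have hterm1 : DegLE (d+1) (fun y => (y i + c) * (q (y+v) + q y)) := IH i c (hq v)
    have hterm2 : DegLE (d+1) (fun y => v i * q (y+v)) := by
      rcases z2_cases (v i) with h | h
      · exact degle_congr _ (fun y => by rw [h, zero_mul]) (degle_const _ 0)
      · exact degle_congr _ (fun y => by rw [h, one_mul]) (degle_shift _ v hq)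
    apply degle_congr _ _ (degle_add _ hterm1 hterm2)
    intro y
    show (y i + c) * (q (y+v) + q y) + v i * q (y+v)
      = ((y+v) i + c) * q (y+v) + (y i + c) * q y
    exact (by decide : ∀ a v c q1 q2 : ZMod 2,
      (a+c) * (q1+q2) + v * q1 = (a+v+c) * q1 + (a+c) * q2) (y i) (v i) c (q (y+v)) (q y)

/-- indicator of agreeing with z on S -/
def chi (S : Finset (Fin n)) (z : QState n) (y : QState n) : ZMod 2 :=
  if ∀ i ∈ S, y i = z i then 1 else 0

lemma chi_split {S : Finset (Fin n)} {i : Fin n} (hi : i ∈ S) (z y : QState n) :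
    chi S z y = (y i + z i + 1) * chi (S.erase i) z y := by
  have hcase : ∀ a b : ZMod 2, (if a = b then (1:ZMod 2) else 0) = a + b + 1 := by decide
  unfold chi
  by_cases h1 : y i = z i
  · by_cases h2 : ∀ j ∈ S.erase i, y j = z j
    · rw [if_pos h2, if_pos, h1]
      · have := z2_add_self (z i); rw [mul_one, this, zero_add]
      · intro j hj
        rcases eq_or_ne j i with rfl | hne
        · exact h1
        · exact h2 j (Finset.mem_erase.mpr ⟨hne, hj⟩)
    · rw [if_neg h2, if_neg, mul_zero]
      intro hall
      exact h2 (fun j hj => hall j (Finset.mem_of_mem_erase hj))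
  · rw [if_neg, show y i + z i + 1 = 0 by
      rcases z2_cases (y i) with h | h <;> rcases z2_cases (z i) with h' | h' <;>
        simp [h, h'] at h1 ⊢ <;> decide, zero_mul]
    intro hall
    exact h1 (hall i hi)

lemma chi_shift (S : Finset (Fin n)) (z y v : QState n) :
    chi S z (y + v) = chi (S) (fun i => z i + v i) y := by
  unfold chi
  congr 1
  apply propext
  constructor
  · intro h j hj
    have h2 : y j + v j = z j := h j hj
    show y j = z j + v j
    rw [← h2, add_assoc, z2_add_self, add_zero]
  · intro h j hj
    show y j + v j = z j
    rw [h j hj, add_assoc, z2_add_self, add_zero]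
lemma chi_const (z : QState n) : ∀ y, chi (∅ : Finset (Fin n)) z y = 1 := by
  intro y; unfold chi; rw [if_pos]; intro i hi; exact absurd hi (Finset.notMem_empty i)

lemma chi_inv {S : Finset (Fin n)} {v : QState n} (hv : ∀ i ∈ S, v i = 0) (z y : QState n) :
    chi S z (y + v) = chi S z y := by
  unfold chi
  congr 1
  apply propext
  constructor
  · intro h j hj
    have := h j hj
    show y j = z j
    rwa [show (y+v) j = y j + v j from rfl, hv j hj, add_zero] at this
  · intro h j hj
    show y j + v j = z j
    rw [hv j hj, add_zero]; exact h j hj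

lemma chi_deg : ∀ (m : ℕ) (S : Finset (Fin n)) (z : QState n), S.card ≤ m →
    DegLE m (chi S z) := by
  intro m
  induction m with
  | zero =>
    intro S z hS
    have hSe : S = ∅ := Finset.card_eq_zero.mp (Nat.le_zero.mp hS)
    subst hSe
    intro x y; rw [chi_const z x, chi_const z y]
  | succ m IH =>
    intro S z hS
    rcases Nat.lt_or_ge S.card (m+1) with h1 | h1
    · exact degle_mono m (IH S z (Nat.lt_succ_iff.mp h1))
    · have hcard : S.card = m + 1 := Nat.le_antisymm hS h1
      intro v
      by_cases hv : ∀ i ∈ S, v i = 0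
      · apply degle_congr m (q := fun _ => (0 : ZMod 2))
        · intro y; rw [chi_inv hv, z2_add_self]
        · exact degle_const m 0
      · push_neg at hv
        obtain ⟨i, hiS, hvi⟩ := hv
        have hvi1 : v i = 1 := by rcases z2_cases (v i) with h | h; exact absurd h hvi; exact h
        set S' := S.erase i with hS'
        have hcard' : S'.card = m := by
          rw [hS', Finset.card_erase_of_mem hiS, hcard]
          omega
        have key : ∀ y, chi S z (y + v) + chi S z y
            = (y i + z i) * (chi S' z (y + v) + chi S' z y) + chi S' z y := by
          intro y
          rw [chi_split hiS z (y+v), chi_split hiS z y]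
          rw [show (y+v) i = y i + v i from rfl, hvi1]
          exact (by decide : ∀ a b A' A : ZMod 2,
            (a + 1 + b + 1) * A' + (a + b + 1) * A = (a + b) * (A' + A) + A) (y i) (z i) _ _
        apply degle_congr m (fun y => (key y).symm)
        rcases m with _ | d
        · -- m = 0 : S' is empty
          have hSe : S' = ∅ := Finset.card_eq_zero.mp hcard'
          intro x y
          simp only [hSe, chi_const]
          exact (by decide : ∀ a b : ZMod 2, a * (1+1) + 1 = b * (1+1) + 1) _ _
        · have hΔ : DegLE d (fun y => chi S' z (y + v) + chi S' z y) :=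
            (IH S' z (Nat.le_of_eq hcard')) v
          exact degle_add (d+1) (degle_lin_mul d i (z i) hΔ)
            (IH S' z (Nat.le_of_eq hcard'))

lemma degle_univ (q : QState n → ZMod 2) : DegLE n q := by
  have hrep : ∀ y, q y = ∑ z : QState n, q z * chi Finset.univ z y := by
    intro y
    rw [Finset.sum_eq_single y]
    · rw [show chi Finset.univ y y = 1 by unfold chi; rw [if_pos (fun i _ => rfl)], mul_one]
    · intro z _ hzy
      rw [show chi Finset.univ z y = 0 by
        unfold chi; rw [if_neg]; intro hall; exact hzy (funext (fun i => (hall i (Finset.mem_univ i)))).symm, mul_zero]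
    · intro hy; exact absurd (Finset.mem_univ _) hy
  apply degle_congr n (fun y => (hrep y).symm)
  apply degle_sum
  intro z _
  rcases z2_cases (q z) with h | h
  · exact degle_congr n (fun y => by rw [h, zero_mul]) (degle_const n 0)
  · apply degle_congr n (fun y => by rw [h, one_mul])
    apply chi_deg n Finset.univ z
    rw [Finset.card_univ, Fintype.card_fin]

lemma degle_affine {h : QState n → ZMod 2} (hd : DegLE 1 h) :
    ∃ w : QState n, ∀ y, h y = h 0 + dot w y := by
  have key : ∀ v y, h (y + v) = h y + (h v + h 0) := by
    intro v y
    have h1 : h (y + v) + h y = h (0 + v) + h 0 := hd v y 0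
    rw [zero_add] at h1
    exact (by decide : ∀ a b c : ZMod 2, a + b = c → a = b + c) _ _ _ h1
  have radd : ∀ a b : QState n, (h (a + b) + h 0) = (h a + h 0) + (h b + h 0) := by
    intro a b
    rw [add_comm a b, key a b]
    exact (by decide : ∀ x y z : ZMod 2, y + (x + z) + z = x + z + (y + z)) _ _ _
  set r : QState n → ZMod 2 := fun y => h y + h 0 with hr
  let ρ : QState n →+ ZMod 2 := AddMonoidHom.mk' r radd
  refine ⟨fun i => r (Pi.single i 1), fun y => ?_⟩
  have hy : y = ∑ i, Pi.single i (y i) := (Finset.univ_sum_single y).symm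
  have : r y = ∑ i, r (Pi.single i (y i)) := by
    conv_lhs => rw [hy]
    exact map_sum ρ _ _
  have h2 : r y = dot (fun i => r (Pi.single i 1)) y := by
    rw [this, dot]
    apply Finset.sum_congr rfl
    intro i _
    rcases z2_cases (y i) with h | h
    · rw [h, mul_zero, Pi.single_zero]
      exact map_zero ρ
    · rw [h, mul_one]
  rw [← h2]
  show h y = h 0 + (h y + h 0)
  exact (by decide : ∀ a b : ZMod 2, a = b + (a + b)) (h y) (h 0)
/-- The permutation-with-sign matrix `|y⟩ ↦ (-1)^(h y) |y + g y⟩`. -/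
def Wmat (g : QState n → QState n) (h : QState n → ZMod 2) : QMat n :=
  monoM (fun y => y + g y) (fun y => sgn (h y))

section Wlemmas

variable {g : QState n → QState n} {h : QState n → ZMod 2}
variable (hg1 : ∀ a b, g (a + g b) = g a) (hh1 : ∀ a b, h (a + g b) = h a)

include hg1 in
lemma W_invol : ∀ y, (y + g y) + g (y + g y) = y := by
  intro y
  rw [show y + g y = y + g y + 0 by rw [add_zero], add_zero, hg1 y y, q_add_add_self]

include hg1 hh1 in
lemma W_star : star (Wmat g h) = Wmat g h := by
  rw [Wmat, monoM_star _ _ (W_invol hg1)]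
  apply monoM_congr (fun y => rfl)
  intro y
  rw [hh1 y y, conj_sgn]

include hg1 hh1 in
lemma W_unitary : Wmat g h ∈ Matrix.unitaryGroup (QState n) ℂ := by
  rw [Matrix.mem_unitaryGroup_iff, W_star hg1 hh1, Wmat, monoM_mul, ← monoM_one]
  apply monoM_congr
  · exact W_invol hg1
  · intro y
    rw [hh1 y y, sgn_sq]

include hg1 hh1 in
lemma W_conj (v w : QState n) :
    Wmat g h * (XStr v * ZStr w) * Wmat g h
      = (XStr v * ZStr w) *
        Wmat (fun y => g y + g (y + v)) (fun y => dot w (g (y + v)) + (h (y + v) + h y)) := by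
  rw [XZ_eq, Wmat, Wmat, monoM_mul, monoM_mul, monoM_mul]
  have harg : ∀ y : QState n, y + g y + v = (y + v) + g y := fun y => by abel
  apply monoM_congr
  · intro y
    show (y + g y + v) + g (y + g y + v) = (y + (g y + g (y + v))) + v
    rw [harg, hg1 (y + v) y]
    abel
  · intro y
    show sgn (h (y + g y + v)) * sgn (dot w (y + g y)) * sgn (h y)
      = sgn (dot w (y + (g y + g (y + v)))) * sgn (dot w (g (y + v)) + (h (y + v) + h y))
    rw [harg, hh1 (y + v) y, dot_add_right, dot_add_right, dot_add_right]
    rw [← sgn_add, ← sgn_add, ← sgn_add]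
    congr 1
    generalize h (y + v) = A
    generalize h y = B
    generalize dot w y = C
    generalize dot w (g y) = D
    generalize dot w (g (y + v)) = E
    revert A B C D E
    decide

end Wlemmas

theorem Wmat_mem_CH : ∀ (d : ℕ) (g : QState n → QState n) (h : QState n → ZMod 2),
    (∀ a b, g (a + g b) = g a) →
    (∀ a b, h (a + g b) = h a) →
    (∀ i, DegLE d (fun y => g y i)) →
    DegLE (d+1) h →
    Wmat g h ∈ CH n (d+1) := by
  intro d
  induction d with
  | zero =>
    intro g h hg1 hh1 hgd hhd
    obtain ⟨w, hw⟩ := degle_affine hhd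
    have hgc : ∀ y, g y = g 0 := fun y => funext fun i => hgd i y 0
    rw [CH_one]
    refine ⟨sgn (h 0), g 0, w, sgn_pow4 _, ?_⟩
    rw [XZ_eq, monoM_smul, Wmat]
    apply monoM_congr
    · intro y; rw [hgc y]
    · intro y; rw [hw y, sgn_add]
  | succ d IH =>
    intro g h hg1 hh1 hgd hhd
    apply mem_CH_succ_succ (W_unitary hg1 hh1)
    rintro P ⟨c, v, w, hc, rfl⟩
    rw [W_star hg1 hh1, mul_smul_comm, smul_mul_assoc, W_conj hg1 hh1 v w]
    apply CH_smul d c _ hc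
    set g' : QState n → QState n := fun y => g y + g (y + v) with hg'def
    set h' : QState n → ZMod 2 := fun y => dot w (g (y + v)) + (h (y + v) + h y) with hh'def
    have hg'1 : ∀ a b, g' (a + g' b) = g' a := by
      intro a b
      have e1 : a + g' b = (a + g (b + v)) + g b := by rw [hg'def]; abel
      have e2 : a + g' b + v = ((a + v) + g (b + v)) + g b := by rw [hg'def]; funext i; simp only [Pi.add_apply]; ring
      rw [hg'def]
      show g (a + g' b) + g (a + g' b + v) = g a + g (a + v)
      rw [e2, e1]
      simp only [hg1]
    have hh'1 : ∀ a b, h' (a + g' b) = h' a := by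
      intro a b
      have e1 : a + g' b = (a + g (b + v)) + g b := by rw [hg'def]; abel
      have e2 : a + g' b + v = ((a + v) + g (b + v)) + g b := by rw [hg'def]; funext i; simp only [Pi.add_apply]; ring
      rw [hh'def]
      show dot w (g (a + g' b + v)) + (h (a + g' b + v) + h (a + g' b)) =
        dot w (g (a + v)) + (h (a + v) + h a)
      rw [e2, e1]
      simp only [hg1, hh1]
    have hg'd : ∀ i, DegLE d (fun y => g' y i) := by
      intro i
      apply degle_congr d (q := fun y => g (y + v) i + g y i)
      · intro y
        show g (y + v) i + g y i = g' y i
        rw [hg'def]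
        show g (y + v) i + g y i = g y i + g (y + v) i
        rw [add_comm]
      · exact hgd i v
    have hh'd : DegLE (d+1) h' := by
      apply degle_add
      · apply degle_congr (d+1) (q := fun y => ∑ j, w j * g (y + v) j)
        · intro y; rfl
        · apply degle_sum
          intro j _
          rcases z2_cases (w j) with hwj | hwj
          · exact degle_congr _ (fun y => by rw [hwj, zero_mul]) (degle_const _ 0)
          · exact degle_congr _ (fun y => by rw [hwj, one_mul])
              (degle_shift _ v (hgd j))
      · exact hhd v
    exact (CH_pauli_mul d _ _ (XZ_mem v w) (IH g' h' hg'1 hh'1 hg'd hh'd)).1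
lemma mcxFun_eq (t : Fin n) (S : Finset (Fin n)) (p x : QState n) :
    mcxFun t S p x = x + (if ∀ i ∈ S, x i = p i then Pi.single t (1 : ZMod 2) else 0) := by
  unfold mcxFun
  by_cases hcond : ∀ i ∈ S, x i = p i
  · rw [if_pos hcond, if_pos hcond]
    funext j
    rcases eq_or_ne j t with rfl | hne
    · rw [Function.update_self, Pi.add_apply, Pi.single_eq_same]
    · rw [Function.update_of_ne hne, Pi.add_apply, Pi.single_eq_of_ne hne, add_zero]
  · rw [if_neg hcond, if_neg hcond, add_zero]

lemma mcxFun_add (t : Fin n) (S : Finset (Fin n)) (p x z : QState n)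
    (hz : ∀ i ∈ S, z i = 0) : mcxFun t S p (x + z) = mcxFun t S p x + z := by
  rw [mcxFun_eq, mcxFun_eq]
  have hcond : (∀ i ∈ S, (x + z) i = p i) ↔ (∀ i ∈ S, x i = p i) := by
    constructor
    · intro hall i hi
      have := hall i hi
      rwa [show (x+z) i = x i + z i from rfl, hz i hi, add_zero] at this
    · intro hall i hi
      rw [show (x+z) i = x i + z i from rfl, hz i hi, add_zero]
      exact hall i hi
  rw [if_congr hcond rfl rfl]
  abel

lemma mcxFun_comm (t₁ t₂ : Fin n) (S₁ S₂ : Finset (Fin n)) (p₁ p₂ : QState n)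
    (h1 : t₁ ∉ S₂) (h2 : t₂ ∉ S₁) (y : QState n) :
    mcxFun t₁ S₁ p₁ (mcxFun t₂ S₂ p₂ y) = mcxFun t₂ S₂ p₂ (mcxFun t₁ S₁ p₁ y) := by
  have hz1 : ∀ i ∈ S₂, (if ∀ j ∈ S₁, y j = p₁ j then Pi.single t₁ (1 : ZMod 2) else (0 : QState n)) i = 0 := by
    intro i hi
    split
    · exact Pi.single_eq_of_ne (fun he => h1 (by rw [← he]; exact hi)) 1
    · rfl
  have hz2 : ∀ i ∈ S₁, (if ∀ j ∈ S₂, y j = p₂ j then Pi.single t₂ (1 : ZMod 2) else (0 : QState n)) i = 0 := by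
    intro i hi
    split
    · exact Pi.single_eq_of_ne (fun he => h2 (by rw [← he]; exact hi)) 1
    · rfl
  conv_lhs => rw [mcxFun_eq t₂, mcxFun_add t₁ S₁ p₁ y _ hz2, mcxFun_eq t₁]
  conv_rhs => rw [mcxFun_eq t₁, mcxFun_add t₂ S₂ p₂ y _ hz1, mcxFun_eq t₂]
  abel

/-- composite action of a list of multi-controlled NOTs -/
def phiL (L : List (Fin n × Finset (Fin n) × QState n)) : QState n → QState n :=
  L.foldr (fun g acc => fun y => mcxFun g.1 g.2.1 g.2.2 (acc y)) id

lemma mcxMat_eq (t : Fin n) (S : Finset (Fin n)) (p : QState n) :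
    mcxMat t S p = monoM (mcxFun t S p) (fun _ => 1) := rfl

lemma prod_eq (L : List (Fin n × Finset (Fin n) × QState n)) :
    (L.map fun g => mcxMat g.1 g.2.1 g.2.2).prod = monoM (phiL L) (fun _ => 1) := by
  induction L with
  | nil =>
    rw [List.map_nil, List.prod_nil, ← monoM_one]
    rfl
  | cons g L IH =>
    rw [List.map_cons, List.prod_cons, IH, mcxMat_eq, monoM_mul]
    apply monoM_congr (fun y => rfl) (fun y => one_mul 1)

lemma phiL_fix (L : List (Fin n × Finset (Fin n) × QState n)) (y : QState n) (i : Fin n)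
    (hi : ∀ g ∈ L, i ≠ g.1) : phiL L y i = y i := by
  induction L with
  | nil => rfl
  | cons g L IH =>
    show mcxFun g.1 g.2.1 g.2.2 (phiL L y) i = y i
    rw [mcxFun_eq]
    show phiL L y i + _ = y i
    rw [IH (fun g' hg' => hi g' (List.mem_cons_of_mem g hg'))]
    have : (if ∀ j ∈ g.2.1, phiL L y j = g.2.2 j then Pi.single g.1 (1 : ZMod 2) else (0 : QState n)) i = 0 := by
      split
      · exact Pi.single_eq_of_ne (hi g (List.mem_cons_self)) 1
      · rfl
    rw [this, add_zero]

lemma phiL_add (L : List (Fin n × Finset (Fin n) × QState n)) (y z : QState n)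
    (hz : ∀ g ∈ L, ∀ j ∈ g.2.1, z j = 0) : phiL L (y + z) = phiL L y + z := by
  induction L with
  | nil => rfl
  | cons g L IH =>
    show mcxFun g.1 g.2.1 g.2.2 (phiL L (y + z)) = mcxFun g.1 g.2.1 g.2.2 (phiL L y) + z
    rw [IH (fun g' hg' => hz g' (List.mem_cons_of_mem g hg'))]
    exact mcxFun_add _ _ _ _ _ (hz g (List.mem_cons_self))

/-- a permutation written as a product of multi-controlled NOTs
in which no wire carries both a target and a control (0-wire mismatch) has
pairwise commuting constituent gates, and the product lies in some finite
level of the Clifford Hierarchy. -/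
theorem zero_wire_mismatch_in_CH {n : ℕ}
    (L : List (Fin n × Finset (Fin n) × QState n))
    (hmm : ∀ g ∈ L, ∀ h ∈ L, g.1 ∉ h.2.1) :
    (∀ g ∈ L, ∀ h ∈ L,
      mcxMat g.1 g.2.1 g.2.2 * mcxMat h.1 h.2.1 h.2.2 =
        mcxMat h.1 h.2.1 h.2.2 * mcxMat g.1 g.2.1 g.2.2) ∧
    ∃ k : ℕ, (L.map fun g => mcxMat g.1 g.2.1 g.2.2).prod ∈ CH n k := by
  constructor
  · intro g hg h hh
    rw [mcxMat_eq, mcxMat_eq, monoM_mul, monoM_mul]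
    exact monoM_congr
      (fun y => mcxFun_comm _ _ _ _ _ _ (hmm g hg h hh) (hmm h hh g hg) y)
      (fun y => rfl)
  · refine ⟨n + 1, ?_⟩
    rw [prod_eq]
    set f : QState n → QState n := fun y => phiL L y + y with hfdef
    have hWf : monoM (phiL L) (fun _ => (1:ℂ)) = Wmat f (fun _ => 0) := by
      apply monoM_congr
      · intro y
        show phiL L y = y + f y
        show phiL L y = y + (phiL L y + y)
        funext i
        exact (by decide : ∀ a b : ZMod 2, a = b + (a + b)) _ _
      · intro y
        rw [sgn_zero]
    rw [hWf]
    have hsupp : ∀ b : QState n, ∀ g ∈ L, ∀ j ∈ g.2.1, f b j = 0 := by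
      intro b g hg j hj
      have hne : ∀ g' ∈ L, j ≠ g'.1 := by
        intro g' hg' he
        exact hmm g' hg' g hg (by rw [← he]; exact hj)
      show phiL L b j + b j = 0
      rw [phiL_fix L b j hne, z2_add_self]
    have hf1 : ∀ a b, f (a + f b) = f a := by
      intro a b
      show phiL L (a + f b) + (a + f b) = phiL L a + a
      rw [phiL_add L a (f b) (hsupp b)]
      funext i
      show phiL L a i + f b i + (a i + f b i) = phiL L a i + a i
      exact (by decide : ∀ x z y : ZMod 2, x + z + (y + z) = x + y) _ _ _
    exact Wmat_mem_CH n f (fun _ => 0) hf1 (fun a b => rfl)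
      (fun i => degle_univ _) (degle_const _ 0)
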